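/- Let $E$ be a Banach space of $\mu$-measurable functions on $\mathrm{supp}(\rho_0)$ such that (i) $\rho_0 \in E$, (ii) $E$ has the lattice property (if $|g| \le |f|$ a.e. with $f \in E$ then $g \in E$ with $\|g\|_E \le \|f\|_E$), (iii) $E \subseteq L^2_{1/\rho_0}$, and (iv) the operator $B : \{\Psi_0\}^\perp \to E$ is bounded. Then $E = L^2_{1/\rho_0}$. -/

import Mathlib

open MeasureTheory Complex ENNReal NNReal

/-- **minimality of `L²_{1/ρ0}`.**  Let `Ψ0` be a normalized `N`-body
wave function (the `N`-body space `⋀^N L²(Ω)` being modelled as `L²(Ω × T)`, with `T`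
abstracting the last `N−1` coordinates) with density `ρ0`.  Let `E` be a Banach function
space (a linear space of measurable functions with a norm `nE`) on `supp ρ0` such that
(i) `ρ0 ∈ E`, (ii) `E` has the lattice property, (iii) `E ⊆ L²_{1/ρ0}`, and (iv)
`B : {Ψ0}^⊥ → E` is bounded.  Then `E = L²_{1/ρ0}` (membership in `L²_{1/ρ0}` being
expressed by finiteness of `∫ |f|² ρ0⁻¹`, with the weight `∞` off `supp ρ0`). -/
theorem stmt19 {Ω T : Type*} [MeasurableSpace Ω] [MeasurableSpace T]
    (μ : Measure Ω) (ν : Measure T) [SigmaFinite μ] [SigmaFinite ν]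
    (N : ℕ) (hN : 0 < N)
    (Ψ0 : Ω × T → ℂ) (hΨ0 : MemLp Ψ0 2 (μ.prod ν))
    (hΨ0norm : ∫ p, ‖Ψ0 p‖ ^ 2 ∂(μ.prod ν) = 1)
    (ρ0 : Ω → ℝ)
    (hρ0 : ∀ r, ρ0 r = N * ∫ y, ‖Ψ0 (r, y)‖ ^ 2 ∂ν)
    (E : Set (Ω → ℂ)) (nE : (Ω → ℂ) → ℝ)
    (hEmeas : ∀ f ∈ E, AEStronglyMeasurable f μ)
    (hEadd : ∀ f ∈ E, ∀ g ∈ E, f + g ∈ E)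
    (hEsmul : ∀ f ∈ E, ∀ a : ℂ, a • f ∈ E)
    (hρE : (fun r => (ρ0 r : ℂ)) ∈ E)
    (hlattice : ∀ f ∈ E, ∀ g : Ω → ℂ, AEStronglyMeasurable g μ →
      (∀ᵐ r ∂μ, ‖g r‖ ≤ ‖f r‖) → g ∈ E ∧ nE g ≤ nE f)
    (hsub : ∀ f ∈ E, ∫⁻ r, (‖f r‖₊ : ℝ≥0∞) ^ 2 * (ENNReal.ofReal (ρ0 r))⁻¹ ∂μ < ⊤)
    (hB : ∃ C : ℝ, ∀ Φ : Ω × T → ℂ, MemLp Φ 2 (μ.prod ν) →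
      (∫ p, (starRingEnd ℂ) (Ψ0 p) * Φ p ∂(μ.prod ν)) = 0 →
      (fun r => (N : ℂ) * ∫ y, (starRingEnd ℂ) (Ψ0 (r, y)) * Φ (r, y) ∂ν) ∈ E ∧
        nE (fun r => (N : ℂ) * ∫ y, (starRingEnd ℂ) (Ψ0 (r, y)) * Φ (r, y) ∂ν)
          ≤ C * (eLpNorm Φ 2 (μ.prod ν)).toReal) :
    ∀ f : Ω → ℂ, AEStronglyMeasurable f μ →
      (f ∈ E ↔ ∫⁻ r, (‖f r‖₊ : ℝ≥0∞) ^ 2 * (ENNReal.ofReal (ρ0 r))⁻¹ ∂μ < ⊤) := by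
  obtain ⟨C, hBC⟩ := hB
  intro f hfm
  refine ⟨fun hfE => hsub f hfE, fun hfin => ?_⟩
  clear hsub
  -- elementary helper facts
  have hconj : ∀ z : ℂ, (starRingEnd ℂ) z * z = ((‖z‖ ^ 2 : ℝ) : ℂ) := fun z => by
    rw [mul_comm, Complex.mul_conj, Complex.normSq_eq_norm_sq]
  have hsq3 : ∀ x y : ℝ≥0∞, (x + y) ^ 2 ≤ 3 * (x ^ 2 + y ^ 2) := by
    intro x y
    have hxy : x * y ≤ x ^ 2 + y ^ 2 := by
      rcases le_total x y with h | h
      · calc x * y ≤ y * y := mul_le_mul_left h y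
          _ = y ^ 2 := (sq y).symm
          _ ≤ x ^ 2 + y ^ 2 := le_add_self
      · calc x * y ≤ x * x := mul_le_mul_right h x
          _ = x ^ 2 := (sq x).symm
          _ ≤ x ^ 2 + y ^ 2 := le_self_add
    calc (x + y) ^ 2 = (x ^ 2 + y ^ 2) + (x * y + x * y) := by ring
      _ ≤ (x ^ 2 + y ^ 2) + ((x ^ 2 + y ^ 2) + (x ^ 2 + y ^ 2)) := by gcongr
      _ = 3 * (x ^ 2 + y ^ 2) := by ring
  have hle1 : ∀ a : ℝ≥0∞, a ≤ a ^ 2 + 1 := by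
    intro a
    rcases le_total a 1 with h | h
    · exact h.trans le_add_self
    · calc a = a * 1 := (mul_one a).symm
        _ ≤ a * a := mul_le_mul_right h a
        _ = a ^ 2 := (sq a).symm
        _ ≤ a ^ 2 + 1 := le_self_add
  have hNR : (0 : ℝ) < N := by exact_mod_cast hN
  have hNne : (N : ℝ) ≠ 0 := ne_of_gt hNR
  have hN1 : (1 : ℝ≥0∞) ≤ (N : ℝ≥0∞) := by exact_mod_cast hN
  have hρnn : ∀ r, 0 ≤ ρ0 r := fun r => by
    rw [hρ0 r]
    exact mul_nonneg (Nat.cast_nonneg N) (integral_nonneg fun y => sq_nonneg _)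
  -- the density is integrable with total mass N
  have hWint : Integrable (fun p => ‖Ψ0 p‖ ^ 2) (μ.prod ν) := hΨ0.norm.integrable_sq
  have hWy : ∀ᵐ r ∂μ, Integrable (fun y => ‖Ψ0 (r, y)‖ ^ 2) ν := hWint.prod_right_ae
  have hρm : AEStronglyMeasurable ρ0 μ :=
    (hWint.aestronglyMeasurable.integral_prod_right'.const_mul (N : ℝ)).congr
      (Filter.Eventually.of_forall fun r => (hρ0 r).symm)
  have hρint : Integrable ρ0 μ :=
    (hWint.integral_prod_left.const_mul (N : ℝ)).congr
      (Filter.Eventually.of_forall fun r => (hρ0 r).symm)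
  have hPaem : AEMeasurable (fun r => ENNReal.ofReal (ρ0 r)) μ :=
    hρm.aemeasurable.ennreal_ofReal
  have hρsum : ∫ r, ρ0 r ∂μ = N := by
    have h1 : ∫ r, ρ0 r ∂μ = ∫ r, (N : ℝ) * ∫ y, ‖Ψ0 (r, y)‖ ^ 2 ∂ν ∂μ :=
      integral_congr_ae (Filter.Eventually.of_forall hρ0)
    have h2 : ∫ r, ∫ y, ‖Ψ0 (r, y)‖ ^ 2 ∂ν ∂μ = ∫ p, ‖Ψ0 p‖ ^ 2 ∂(μ.prod ν) :=
      (integral_prod _ hWint).symm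
    rw [h1, integral_const_mul, h2, hΨ0norm, mul_one]
  have hρlint : ∫⁻ r, ENNReal.ofReal (ρ0 r) ∂μ < ⊤ := by
    have h1 : ∫⁻ r, ENNReal.ofReal (ρ0 r) ∂μ = ENNReal.ofReal (∫ r, ρ0 r ∂μ) :=
      (ofReal_integral_eq_lintegral_ofReal hρint (Filter.Eventually.of_forall hρnn)).symm
    rw [h1]
    exact ENNReal.ofReal_lt_top
  -- a.e. identity between `ρ0` and the inner `lintegral`
  have hρeq : ∀ᵐ r ∂μ, ENNReal.ofReal (ρ0 r)
      = N * ∫⁻ y, (‖Ψ0 (r, y)‖₊ : ℝ≥0∞) ^ 2 ∂ν := by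
    filter_upwards [hWy] with r hr
    rw [hρ0 r, ENNReal.ofReal_mul (Nat.cast_nonneg N), ENNReal.ofReal_natCast,
      ofReal_integral_eq_lintegral_ofReal hr (Filter.Eventually.of_forall fun y => sq_nonneg _)]
    congr 1
    refine lintegral_congr fun y => ?_
    rw [ENNReal.ofReal_pow (norm_nonneg _), ofReal_norm, enorm_eq_nnnorm]
  -- `f` vanishes a.e. where `ρ0` vanishes
  have hfaem : AEMeasurable (fun r => (‖f r‖₊ : ℝ≥0∞) ^ 2 * (ENNReal.ofReal (ρ0 r))⁻¹) μ :=
    (hfm.enorm.pow_const 2).mul hPaem.inv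
  have hfz : ∀ᵐ r ∂μ, ρ0 r = 0 → f r = 0 := by
    filter_upwards [ae_lt_top' hfaem hfin.ne] with r hr hρr
    by_contra hfr
    have h0 : (‖f r‖₊ : ℝ≥0∞) ^ 2 ≠ 0 := by
      simp [pow_eq_zero_iff, hfr]
    rw [hρr, ENNReal.ofReal_zero, ENNReal.inv_zero, ENNReal.mul_top h0] at hr
    exact absurd hr (lt_irrefl _)
  -- the quotient function
  set h0 : Ω → ℝ := fun r => ‖f r‖ / ρ0 r with hh0def
  have hh0m : AEStronglyMeasurable h0 μ :=
    (hfm.norm.aemeasurable.div hρm.aemeasurable).aestronglyMeasurable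
  have hK : ∫⁻ r, (‖h0 r‖₊ : ℝ≥0∞) ^ 2 * ENNReal.ofReal (ρ0 r) ∂μ < ⊤ := by
    refine lt_of_le_of_lt (lintegral_mono fun r => ?_) hfin
    rcases eq_or_lt_of_le (hρnn r) with hr | hr
    · have hz : h0 r = 0 := by
        simp only [hh0def]
        rw [← hr, _root_.div_zero]
      simp [hz]
    · have hne : ρ0 r ≠ 0 := ne_of_gt hr
      have h0nn : 0 ≤ h0 r := div_nonneg (norm_nonneg _) (hρnn r)
      refine le_of_eq ?_
      calc (‖h0 r‖₊ : ℝ≥0∞) ^ 2 * ENNReal.ofReal (ρ0 r)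
          = ENNReal.ofReal (h0 r ^ 2 * ρ0 r) := by
            rw [← enorm_eq_nnnorm, ← ofReal_norm (h0 r), Real.norm_of_nonneg h0nn,
              ← ENNReal.ofReal_pow h0nn, ← ENNReal.ofReal_mul (sq_nonneg _)]
        _ = ENNReal.ofReal (‖f r‖ ^ 2 / ρ0 r) := by
            congr 1
            simp only [hh0def]
            field_simp
        _ = ENNReal.ofReal (‖f r‖ ^ 2) * (ENNReal.ofReal (ρ0 r))⁻¹ := by
            rw [ENNReal.ofReal_div_of_pos hr, div_eq_mul_inv]
        _ = (‖f r‖₊ : ℝ≥0∞) ^ 2 * (ENNReal.ofReal (ρ0 r))⁻¹ := by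
            rw [ENNReal.ofReal_pow (norm_nonneg _), ofReal_norm, enorm_eq_nnnorm]
  -- `h0 * ρ0` is integrable (it equals `‖f‖` a.e.)
  have hqint : Integrable (fun r => h0 r * ρ0 r) μ := by
    refine ⟨hh0m.mul hρm, ?_⟩
    refine lt_of_le_of_lt (b := ∫⁻ r, ((‖h0 r‖₊ : ℝ≥0∞) ^ 2 * ENNReal.ofReal (ρ0 r)
      + ENNReal.ofReal (ρ0 r)) ∂μ) (lintegral_mono fun r => ?_) ?_
    · have h1 : (‖ρ0 r‖₊ : ℝ≥0∞) = ENNReal.ofReal (ρ0 r) := by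
        rw [← enorm_eq_nnnorm, ← ofReal_norm, Real.norm_of_nonneg (hρnn r)]
      calc (‖h0 r * ρ0 r‖₊ : ℝ≥0∞) = (‖h0 r‖₊ : ℝ≥0∞) * ENNReal.ofReal (ρ0 r) := by
            rw [nnnorm_mul, ENNReal.coe_mul, h1]
        _ ≤ ((‖h0 r‖₊ : ℝ≥0∞) ^ 2 + 1) * ENNReal.ofReal (ρ0 r) := by
            gcongr
            exact hle1 _
        _ = (‖h0 r‖₊ : ℝ≥0∞) ^ 2 * ENNReal.ofReal (ρ0 r) + ENNReal.ofReal (ρ0 r) := by ring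
    · rw [lintegral_add_left' (f := fun r => (‖h0 r‖₊ : ℝ≥0∞) ^ 2 * ENNReal.ofReal (ρ0 r))
        ((hh0m.enorm.pow_const 2).mul hPaem) _]
      exact ENNReal.add_lt_top.mpr ⟨hK, hρlint⟩
  -- the orthogonal projection constant
  set c : ℝ := (∫ r, h0 r * ρ0 r ∂μ) / N with hcdef
  set h : Ω → ℝ := fun r => h0 r - c with hhdef
  have hhm : AEStronglyMeasurable h μ := hh0m.sub aestronglyMeasurable_const
  have hsplit : (fun r => h r * ρ0 r) = fun r => h0 r * ρ0 r - c * ρ0 r := by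
    funext r
    simp only [hhdef]
    ring
  have hhρint : Integrable (fun r => h r * ρ0 r) μ := by
    rw [hsplit]
    exact hqint.sub (hρint.const_mul c)
  have hhρzero : ∫ r, h r * ρ0 r ∂μ = 0 := by
    rw [hsplit, integral_sub hqint (hρint.const_mul c), integral_const_mul, hρsum, hcdef,
      div_mul_cancel₀ _ hNne, sub_self]
  have hh2 : ∫⁻ r, (‖h r‖₊ : ℝ≥0∞) ^ 2 * ENNReal.ofReal (ρ0 r) ∂μ < ⊤ := by
    have hb : ∀ r, (‖h r‖₊ : ℝ≥0∞) ^ 2 * ENNReal.ofReal (ρ0 r)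
        ≤ 3 * ((‖h0 r‖₊ : ℝ≥0∞) ^ 2 * ENNReal.ofReal (ρ0 r))
          + (3 * (‖c‖₊ : ℝ≥0∞) ^ 2) * ENNReal.ofReal (ρ0 r) := by
      intro r
      have h1 : (‖h r‖₊ : ℝ≥0∞) ≤ (‖h0 r‖₊ : ℝ≥0∞) + (‖c‖₊ : ℝ≥0∞) := by
        rw [← ENNReal.coe_add]
        exact_mod_cast nnnorm_sub_le (h0 r) c
      calc (‖h r‖₊ : ℝ≥0∞) ^ 2 * ENNReal.ofReal (ρ0 r)
          ≤ ((‖h0 r‖₊ : ℝ≥0∞) + (‖c‖₊ : ℝ≥0∞)) ^ 2 * ENNReal.ofReal (ρ0 r) := by gcongr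
        _ ≤ (3 * ((‖h0 r‖₊ : ℝ≥0∞) ^ 2 + (‖c‖₊ : ℝ≥0∞) ^ 2)) * ENNReal.ofReal (ρ0 r) := by
            gcongr
            exact hsq3 _ _
        _ = 3 * ((‖h0 r‖₊ : ℝ≥0∞) ^ 2 * ENNReal.ofReal (ρ0 r))
            + (3 * (‖c‖₊ : ℝ≥0∞) ^ 2) * ENNReal.ofReal (ρ0 r) := by ring
    refine lt_of_le_of_lt (lintegral_mono hb) ?_
    have hc3 : (3 : ℝ≥0∞) * (‖c‖₊ : ℝ≥0∞) ^ 2 = ((3 * ‖c‖₊ ^ 2 : ℝ≥0) : ℝ≥0∞) := by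
      push_cast
      ring
    rw [lintegral_add_left' (f := fun r => 3 * ((‖h0 r‖₊ : ℝ≥0∞) ^ 2 * ENNReal.ofReal (ρ0 r)))
        (((hh0m.enorm.pow_const 2).mul hPaem).const_mul 3) _,
      lintegral_const_mul' _ _ (by norm_num), lintegral_const_mul' _ _ (by rw [hc3]; exact ENNReal.coe_ne_top)]
    refine ENNReal.add_lt_top.mpr ⟨ENNReal.mul_lt_top ?_ hK, ENNReal.mul_lt_top ?_ hρlint⟩
    · norm_num
    · rw [hc3]
      exact ENNReal.coe_lt_top
  -- the trial wave function
  set Φ : Ω × T → ℂ := fun p => ((h p.1 : ℝ) : ℂ) * Ψ0 p with hΦdef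
  have hΦm : AEStronglyMeasurable Φ (μ.prod ν) :=
    (Complex.continuous_ofReal.comp_aestronglyMeasurable
      (hhm.comp_quasiMeasurePreserving Measure.quasiMeasurePreserving_fst)).mul hΨ0.1
  have hΦ2 : ∫⁻ p, (‖Φ p‖₊ : ℝ≥0∞) ^ 2 ∂(μ.prod ν) < ⊤ := by
    have key : ∫⁻ p, (‖Φ p‖₊ : ℝ≥0∞) ^ 2 ∂(μ.prod ν)
        = ∫⁻ x, ∫⁻ y, (‖Φ (x, y)‖₊ : ℝ≥0∞) ^ 2 ∂ν ∂μ :=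
      lintegral_prod _ (hΦm.enorm.pow_const 2)
    rw [key]
    have hbound : ∀ᵐ x ∂μ, ∫⁻ y, (‖Φ (x, y)‖₊ : ℝ≥0∞) ^ 2 ∂ν
        ≤ (‖h x‖₊ : ℝ≥0∞) ^ 2 * ENNReal.ofReal (ρ0 x) := by
      filter_upwards [hρeq] with x hx
      have hpt : ∀ y, (‖Φ (x, y)‖₊ : ℝ≥0∞) ^ 2
          = (‖h x‖₊ : ℝ≥0∞) ^ 2 * (‖Ψ0 (x, y)‖₊ : ℝ≥0∞) ^ 2 := by
        intro y
        simp only [hΦdef, nnnorm_mul, ENNReal.coe_mul, mul_pow, Complex.nnnorm_real]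
      rw [lintegral_congr hpt, lintegral_const_mul' _ _ (by simp), hx]
      gcongr
      exact le_mul_of_one_le_left zero_le hN1
    exact lt_of_le_of_lt (lintegral_mono_ae hbound) hh2
  have hΦℒp : MemLp Φ 2 (μ.prod ν) := by
    refine ⟨hΦm, ?_⟩
    refine (eLpNorm_lt_top_iff_lintegral_rpow_enorm_lt_top (by norm_num) (by norm_num)).mpr ?_
    have h2 : ((2 : ℝ≥0∞).toReal) = ((2 : ℕ) : ℝ) := by norm_num
    simp_rw [h2, ENNReal.rpow_natCast]
    exact_mod_cast hΦ2
  -- the pointwise identity for the integrand of `B`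
  have hGpt : ∀ p : Ω × T, (starRingEnd ℂ) (Ψ0 p) * Φ p = ((h p.1 * ‖Ψ0 p‖ ^ 2 : ℝ) : ℂ) := by
    intro p
    calc (starRingEnd ℂ) (Ψ0 p) * Φ p
        = ((h p.1 : ℝ) : ℂ) * ((starRingEnd ℂ) (Ψ0 p) * Ψ0 p) := by
          simp only [hΦdef]
          ring
      _ = ((h p.1 : ℝ) : ℂ) * ((‖Ψ0 p‖ ^ 2 : ℝ) : ℂ) := by rw [hconj]
      _ = _ := by push_cast; ring
  have hGint : Integrable (fun p : Ω × T => h p.1 * ‖Ψ0 p‖ ^ 2) (μ.prod ν) := by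
    have hm : AEStronglyMeasurable (fun p : Ω × T => h p.1 * ‖Ψ0 p‖ ^ 2) (μ.prod ν) :=
      (hhm.comp_quasiMeasurePreserving Measure.quasiMeasurePreserving_fst).mul
        hWint.aestronglyMeasurable
    refine ⟨hm, ?_⟩
    have key : ∫⁻ p, (‖h p.1 * ‖Ψ0 p‖ ^ 2‖₊ : ℝ≥0∞) ∂(μ.prod ν)
        = ∫⁻ x, ∫⁻ y, (‖h x * ‖Ψ0 (x, y)‖ ^ 2‖₊ : ℝ≥0∞) ∂ν ∂μ :=
      lintegral_prod _ hm.enorm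
    have hfi : ∫⁻ p, (‖h p.1 * ‖Ψ0 p‖ ^ 2‖₊ : ℝ≥0∞) ∂(μ.prod ν) < ⊤ := by
      rw [key]
      have hbound : ∀ᵐ x ∂μ, ∫⁻ y, (‖h x * ‖Ψ0 (x, y)‖ ^ 2‖₊ : ℝ≥0∞) ∂ν
          ≤ (‖h x‖₊ : ℝ≥0∞) * ENNReal.ofReal (ρ0 x) := by
        filter_upwards [hρeq] with x hx
        have hpt : ∀ y, (‖h x * ‖Ψ0 (x, y)‖ ^ 2‖₊ : ℝ≥0∞)
            = (‖h x‖₊ : ℝ≥0∞) * (‖Ψ0 (x, y)‖₊ : ℝ≥0∞) ^ 2 := by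
          intro y
          rw [nnnorm_mul, ENNReal.coe_mul]
          congr 1
          rw [← enorm_eq_nnnorm, ← ofReal_norm, Real.norm_of_nonneg (sq_nonneg _),
            ENNReal.ofReal_pow (norm_nonneg _), ofReal_norm, enorm_eq_nnnorm]
        rw [lintegral_congr hpt, lintegral_const_mul' _ _ ENNReal.coe_ne_top, hx]
        gcongr
        exact le_mul_of_one_le_left zero_le hN1
      refine lt_of_le_of_lt (lintegral_mono_ae hbound) ?_
      refine lt_of_le_of_lt (b := ∫⁻ x, ((‖h x‖₊ : ℝ≥0∞) ^ 2 * ENNReal.ofReal (ρ0 x)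
        + ENNReal.ofReal (ρ0 x)) ∂μ) (lintegral_mono fun x => ?_) ?_
      · calc (‖h x‖₊ : ℝ≥0∞) * ENNReal.ofReal (ρ0 x)
            ≤ ((‖h x‖₊ : ℝ≥0∞) ^ 2 + 1) * ENNReal.ofReal (ρ0 x) := by
              gcongr
              exact hle1 _
          _ = (‖h x‖₊ : ℝ≥0∞) ^ 2 * ENNReal.ofReal (ρ0 x) + ENNReal.ofReal (ρ0 x) := by ring
      · rw [lintegral_add_left' (f := fun r => (‖h r‖₊ : ℝ≥0∞) ^ 2 * ENNReal.ofReal (ρ0 r))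
          ((hhm.enorm.pow_const 2).mul hPaem) _]
        exact ENNReal.add_lt_top.mpr ⟨hh2, hρlint⟩
    exact hfi
  -- the inner-integral identity, valid for every `r`
  have hinner : ∀ r, (N : ℂ) * ∫ y, (starRingEnd ℂ) (Ψ0 (r, y)) * Φ (r, y) ∂ν
      = ((h r * ρ0 r : ℝ) : ℂ) := by
    intro r
    have h1 : ∫ y, (starRingEnd ℂ) (Ψ0 (r, y)) * Φ (r, y) ∂ν
        = ((h r : ℝ) : ℂ) * ∫ y, ((‖Ψ0 (r, y)‖ ^ 2 : ℝ) : ℂ) ∂ν := by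
      rw [← integral_const_mul]
      refine integral_congr_ae (Filter.Eventually.of_forall fun y => ?_)
      show (starRingEnd ℂ) (Ψ0 (r, y)) * Φ (r, y) = ((h r : ℝ) : ℂ) * ((‖Ψ0 (r, y)‖ ^ 2 : ℝ) : ℂ)
      rw [hGpt (r, y)]
      push_cast
      ring
    have h2 : ∫ y, ((‖Ψ0 (r, y)‖ ^ 2 : ℝ) : ℂ) ∂ν = ((∫ y, ‖Ψ0 (r, y)‖ ^ 2 ∂ν : ℝ) : ℂ) :=
      integral_ofReal
    rw [h1, h2, hρ0 r]
    push_cast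
    ring
  -- orthogonality of the trial function
  have hperp : ∫ p, (starRingEnd ℂ) (Ψ0 p) * Φ p ∂(μ.prod ν) = 0 := by
    have h1 : ∫ p, (starRingEnd ℂ) (Ψ0 p) * Φ p ∂(μ.prod ν)
        = ∫ p, ((h p.1 * ‖Ψ0 p‖ ^ 2 : ℝ) : ℂ) ∂(μ.prod ν) :=
      integral_congr_ae (Filter.Eventually.of_forall fun p => hGpt p)
    have h2 : ∫ p, ((h p.1 * ‖Ψ0 p‖ ^ 2 : ℝ) : ℂ) ∂(μ.prod ν)
        = ((∫ p, h p.1 * ‖Ψ0 p‖ ^ 2 ∂(μ.prod ν) : ℝ) : ℂ) := integral_ofReal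
    have h3 : ∫ p : Ω × T, h p.1 * ‖Ψ0 p‖ ^ 2 ∂(μ.prod ν) = 0 := by
      have h4 : ∫ p : Ω × T, h p.1 * ‖Ψ0 p‖ ^ 2 ∂(μ.prod ν)
          = ∫ x, ∫ y, h x * ‖Ψ0 (x, y)‖ ^ 2 ∂ν ∂μ := integral_prod _ hGint
      have h5 : ∀ᵐ x ∂μ, ∫ y, h x * ‖Ψ0 (x, y)‖ ^ 2 ∂ν = (1 / N) * (h x * ρ0 x) := by
        refine Filter.Eventually.of_forall fun x => ?_
        rw [integral_const_mul, hρ0 x]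
        field_simp
      rw [h4, integral_congr_ae h5, integral_const_mul, hhρzero, mul_zero]
    rw [h1, h2, h3, Complex.ofReal_zero]
  -- apply the boundedness of `B` and assemble
  obtain ⟨hBmem, -⟩ := hBC Φ hΦℒp hperp
  have hρCE : ((c : ℂ)) • (fun r => (ρ0 r : ℂ)) ∈ E := hEsmul _ hρE (c : ℂ)
  set F : Ω → ℂ := (fun r => (N : ℂ) * ∫ y, (starRingEnd ℂ) (Ψ0 (r, y)) * Φ (r, y) ∂ν)
    + ((c : ℂ)) • (fun r => (ρ0 r : ℂ)) with hFdef
  have hFE : F ∈ E := hEadd _ hBmem _ hρCE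
  have hcomp : ∀ᵐ r ∂μ, ‖f r‖ ≤ ‖F r‖ := by
    filter_upwards [hfz] with r hr
    have hFr : F r = ((h0 r * ρ0 r : ℝ) : ℂ) := by
      simp only [hFdef, Pi.add_apply, Pi.smul_apply, smul_eq_mul, hinner r, hhdef]
      push_cast
      ring
    rw [hFr]
    rcases eq_or_ne (ρ0 r) 0 with h' | h'
    · rw [hr h', norm_zero]
      positivity
    · have heq : h0 r * ρ0 r = ‖f r‖ := by
        simp only [hh0def]
        exact div_mul_cancel₀ _ h'
      rw [heq, Complex.norm_real, norm_norm]
  exact (hlattice _ hFE f hfm hcomp).1
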